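/- Let N be a norm on ℝ^d which is C²-smooth and strongly convex, i.e. N is twice continuously differentiable on ℝ^d ∖ {0} and the Hessian quadratic form of x ↦ N(x)² is positive definite at every x ≠ 0. Then there exists r₀ > 0 such that for every r with 0 < r < r₀, every 2-dimensional linear subspace P of ℝ^d, and every x with N(x) = 1, the set {z ∈ P : N(z) = 1 and N(z − x) = r} is finite. -/

import Mathlib

set_option maxHeartbeats 1000000

open Set Filter Topology

variable {d : ℕ} {N : (Fin d → ℝ) → ℝ}

lemma norm_aux_nonneg (hN0 : ∀ x, N x = 0 ↔ x = 0)
    (hNsmul : ∀ (a : ℝ) (x), N (a • x) = |a| * N x)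
    (hNadd : ∀ x y, N (x + y) ≤ N x + N y) (x : Fin d → ℝ) : 0 ≤ N x := by
  have h := hNadd x (-x)
  rw [add_neg_cancel, (hN0 0).2 rfl] at h
  have : N (-x) = N x := by
    simpa using hNsmul (-1) x
  nlinarith

lemma norm_aux_neg (hNsmul : ∀ (a : ℝ) (x), N (a • x) = |a| * N x) (x : Fin d → ℝ) :
    N (-x) = N x := by simpa using hNsmul (-1) x

lemma norm_aux_abs_sub (hN0 : ∀ x, N x = 0 ↔ x = 0)
    (hNsmul : ∀ (a : ℝ) (x), N (a • x) = |a| * N x)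
    (hNadd : ∀ x y, N (x + y) ≤ N x + N y) (x y : Fin d → ℝ) :
    |N x - N y| ≤ N (x - y) := by
  have h1 : N x ≤ N (x - y) + N y := by
    have := hNadd (x - y) y; simpa using this
  have h2 : N y ≤ N (y - x) + N x := by
    have := hNadd (y - x) x; simpa using this
  have h3 : N (y - x) = N (x - y) := by
    rw [← norm_aux_neg hNsmul (x - y)]; ring_nf
  rw [abs_sub_le_iff]; constructor <;> linarith

lemma norm_aux_upper (hN0 : ∀ x, N x = 0 ↔ x = 0)
    (hNsmul : ∀ (a : ℝ) (x), N (a • x) = |a| * N x)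
    (hNadd : ∀ x y, N (x + y) ≤ N x + N y) :
    ∃ C : ℝ, 0 < C ∧ ∀ z, N z ≤ C * ‖z‖ := by
  classical
  have hsum0 : (0:ℝ) ≤ ∑ i, N (fun j => if i = j then 1 else 0) :=
    Finset.sum_nonneg fun i _ => norm_aux_nonneg hN0 hNsmul hNadd _
  refine ⟨(∑ i, N (fun j => if i = j then 1 else 0)) + 1, by linarith, ?_⟩
  intro z
  have hz : z = ∑ i, z i • fun j => if i = j then (1:ℝ) else 0 := pi_eq_sum_univ z
  have hle : N z ≤ ∑ i, N (z i • fun j => if i = j then (1:ℝ) else 0) := by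
    conv_lhs => rw [hz]
    refine Finset.le_sum_of_subadditive N ((hN0 0).2 rfl).le hNadd _ _
  have hle2 : ∀ i : Fin d, N (z i • fun j => if i = j then (1:ℝ) else 0)
      ≤ ‖z‖ * N (fun j => if i = j then (1:ℝ) else 0) := by
    intro i
    rw [hNsmul]
    have h1 : |z i| ≤ ‖z‖ := by
      simpa [Real.norm_eq_abs] using norm_le_pi_norm z i
    exact mul_le_mul_of_nonneg_right h1 (norm_aux_nonneg hN0 hNsmul hNadd _)
  calc N z ≤ ∑ i, N (z i • fun j => if i = j then (1:ℝ) else 0) := hle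
    _ ≤ ∑ i, ‖z‖ * N (fun j => if i = j then (1:ℝ) else 0) :=
        Finset.sum_le_sum (fun i _ => hle2 i)
    _ = (∑ i, N (fun j => if i = j then (1:ℝ) else 0)) * ‖z‖ := by
        rw [← Finset.mul_sum]; ring
    _ ≤ ((∑ i, N (fun j => if i = j then (1:ℝ) else 0)) + 1) * ‖z‖ := by
        have := norm_nonneg z; nlinarith

lemma norm_aux_cont (hN0 : ∀ x, N x = 0 ↔ x = 0)
    (hNsmul : ∀ (a : ℝ) (x), N (a • x) = |a| * N x)
    (hNadd : ∀ x y, N (x + y) ≤ N x + N y) : Continuous N := by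
  obtain ⟨C, hC, hCle⟩ := norm_aux_upper hN0 hNsmul hNadd
  rw [Metric.continuous_iff]
  intro b ε hε
  refine ⟨ε / C, by positivity, fun a ha => ?_⟩
  have h1 : |N a - N b| ≤ N (a - b) := norm_aux_abs_sub hN0 hNsmul hNadd a b
  have h2 : N (a - b) ≤ C * ‖a - b‖ := hCle _
  rw [Real.dist_eq]
  rw [dist_eq_norm] at ha
  calc |N a - N b| ≤ C * ‖a - b‖ := le_trans h1 h2
    _ < C * (ε / C) := by exact mul_lt_mul_of_pos_left ha hC
    _ = ε := by field_simp

lemma norm_aux_lower (hd : 0 < d) (hN0 : ∀ x, N x = 0 ↔ x = 0)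
    (hNsmul : ∀ (a : ℝ) (x), N (a • x) = |a| * N x)
    (hNadd : ∀ x y, N (x + y) ≤ N x + N y) :
    ∃ c : ℝ, 0 < c ∧ ∀ z, c * ‖z‖ ≤ N z := by
  have : Nonempty (Fin d) := ⟨⟨0, hd⟩⟩
  have hnt : Nontrivial (Fin d → ℝ) := by
    refine ⟨0, (fun _ => 1), ?_⟩
    intro h
    have := congrFun h ⟨0, hd⟩
    norm_num at this
  have hsph : (Metric.sphere (0 : Fin d → ℝ) 1).Nonempty :=
    NormedSpace.sphere_nonempty.2 zero_le_one
  have hcpt : IsCompact (Metric.sphere (0 : Fin d → ℝ) 1) := isCompact_sphere 0 1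
  obtain ⟨z₀, hz₀mem, hz₀min⟩ := hcpt.exists_isMinOn hsph
    ((norm_aux_cont hN0 hNsmul hNadd).continuousOn)
  have hz₀ : z₀ ≠ 0 := by
    intro h
    rw [mem_sphere_iff_norm, sub_zero, h] at hz₀mem
    simp at hz₀mem
  refine ⟨N z₀, lt_of_le_of_ne (norm_aux_nonneg hN0 hNsmul hNadd z₀)
    (fun h => hz₀ ((hN0 z₀).1 h.symm)), fun z => ?_⟩
  rcases eq_or_ne z 0 with rfl | hz
  · simp [(hN0 0).2 rfl]
  · have hnz : ‖z‖ ≠ 0 := norm_ne_zero_iff.2 hz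
    have hmem : ‖z‖⁻¹ • z ∈ Metric.sphere (0 : Fin d → ℝ) 1 := by
      rw [mem_sphere_iff_norm, sub_zero, norm_smul, norm_inv, norm_norm]
      field_simp
    have := hz₀min hmem
    have h2 : N (‖z‖⁻¹ • z) = ‖z‖⁻¹ * N z := by
      rw [hNsmul, abs_inv, abs_norm]
    have h3 : N z₀ ≤ ‖z‖⁻¹ * N z := h2 ▸ this
    have hpos : (0:ℝ) < ‖z‖ := norm_pos_iff.2 hz
    have h4 := mul_le_mul_of_nonneg_right h3 (le_of_lt hpos)
    rw [mul_comm (‖z‖⁻¹) (N z), mul_assoc, inv_mul_cancel₀ hnz, mul_one] at h4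
    exact h4


variable {f : (Fin d → ℝ) → ℝ}

lemma aux_diffAt (hf : ContDiffOn ℝ 2 f {(0: Fin d → ℝ)}ᶜ) {w : Fin d → ℝ} (hw : w ≠ 0) :
    DifferentiableAt ℝ f w := by
  have h := (hf.contDiffAt (isOpen_compl_singleton.mem_nhds (by simpa using hw)))
  exact h.differentiableAt (by norm_num)

lemma aux_fderiv_contDiffOn (hf : ContDiffOn ℝ 2 f {(0: Fin d → ℝ)}ᶜ) :
    ContDiffOn ℝ 1 (fderiv ℝ f) {(0: Fin d → ℝ)}ᶜ :=
  hf.fderiv_of_isOpen isOpen_compl_singleton (by norm_num)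

lemma aux_fderiv_diffAt (hf : ContDiffOn ℝ 2 f {(0: Fin d → ℝ)}ᶜ) {w : Fin d → ℝ} (hw : w ≠ 0) :
    DifferentiableAt ℝ (fderiv ℝ f) w := by
  have h := ((aux_fderiv_contDiffOn hf).contDiffAt
    (isOpen_compl_singleton.mem_nhds (by simpa using hw)))
  exact h.differentiableAt (by norm_num)

lemma path_hasDerivAt (hf : ContDiffOn ℝ 2 f {(0: Fin d → ℝ)}ᶜ) {z v : Fin d → ℝ} {t : ℝ}
    (h : z + t • v ≠ 0) :
    HasDerivAt (fun s : ℝ => f (z + s • v)) (fderiv ℝ f (z + t • v) v) t := by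
  have hpath : HasDerivAt (fun s : ℝ => z + s • v) v t := by
    simpa using ((hasDerivAt_id t).smul_const v).const_add z
  have := ((aux_diffAt hf h).hasFDerivAt).comp_hasDerivAt t hpath
  exact this

lemma path2_hasDerivAt (hf : ContDiffOn ℝ 2 f {(0: Fin d → ℝ)}ᶜ) {z v : Fin d → ℝ} {t : ℝ}
    (h : z + t • v ≠ 0) :
    HasDerivAt (fun s : ℝ => fderiv ℝ f (z + s • v) v)
      (fderiv ℝ (fderiv ℝ f) (z + t • v) v v) t := by
  have hpath : HasDerivAt (fun s : ℝ => z + s • v) v t := by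
    simpa using ((hasDerivAt_id t).smul_const v).const_add z
  have hc := ((aux_fderiv_diffAt hf h).hasFDerivAt).comp_hasDerivAt t hpath
  have := ((ContinuousLinearMap.apply ℝ ℝ v).hasFDerivAt).comp_hasDerivAt t hc
  exact this

lemma aux_eventually_ne {z : Fin d → ℝ} (hz : z ≠ 0) (v : Fin d → ℝ) :
    ∀ᶠ t : ℝ in 𝓝 0, z + t • v ≠ 0 := by
  have hcont : Continuous (fun t : ℝ => z + t • v) := by continuity
  have : (fun t : ℝ => z + t • v) 0 = z := by simp
  have h := hcont.continuousAt (x := (0:ℝ))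
  have hmem : {w : Fin d → ℝ | w ≠ 0} ∈ 𝓝 ((fun t : ℝ => z + t • v) 0) := by
    rw [this]
    exact isOpen_compl_singleton.mem_nhds (by simpa using hz)
  exact h hmem

lemma iterated_eq_f'' (hf : ContDiffOn ℝ 2 f {(0: Fin d → ℝ)}ᶜ) {z : Fin d → ℝ} (hz : z ≠ 0)
    (v : Fin d → ℝ) :
    iteratedDeriv 2 (fun t : ℝ => f (z + t • v)) 0 = fderiv ℝ (fderiv ℝ f) z v v := by
  have hev : (fun t : ℝ => fderiv ℝ f (z + t • v) v) =ᶠ[𝓝 (0:ℝ)]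
      deriv (fun s : ℝ => f (z + s • v)) := by
    filter_upwards [aux_eventually_ne hz v] with t ht
    exact ((path_hasDerivAt hf ht).deriv).symm
  have h2 : iteratedDeriv 2 (fun t : ℝ => f (z + t • v)) 0
      = deriv (deriv (fun t : ℝ => f (z + t • v))) 0 := by
    rw [show (2:ℕ) = 1 + 1 from rfl, iteratedDeriv_succ, iteratedDeriv_one]
  rw [h2, ← hev.deriv_eq]
  have h0 : z + (0:ℝ) • v ≠ 0 := by simpa using hz
  have h3 := (path2_hasDerivAt hf h0).deriv
  rw [h3]
  norm_num

lemma fderiv_homog (hf : ContDiffOn ℝ 2 f {(0: Fin d → ℝ)}ᶜ)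
    (hhom : ∀ (a : ℝ) (z), f (a • z) = a ^ 2 * f z)
    {a : ℝ} (ha : 0 < a) {z : Fin d → ℝ} (hz : z ≠ 0) :
    fderiv ℝ f (a • z) = a • fderiv ℝ f z := by
  have haz : a • z ≠ 0 := smul_ne_zero (ne_of_gt ha) hz
  have h1 : fderiv ℝ (f ∘ (fun w : Fin d → ℝ => a • w)) z
      = (fderiv ℝ f (a • z)).comp (fderiv ℝ (fun w : Fin d → ℝ => a • w) z) :=
    fderiv_comp z (aux_diffAt hf haz) (differentiableAt_id.const_smul a)
  have h2 : fderiv ℝ (fun w : Fin d → ℝ => a • w) z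
      = a • ContinuousLinearMap.id ℝ (Fin d → ℝ) := by
    have hcoe : (fun w : Fin d → ℝ => a • w)
        = ⇑(a • ContinuousLinearMap.id ℝ (Fin d → ℝ)) := by ext w i; simp
    rw [hcoe, ContinuousLinearMap.fderiv]
  have h3 : (f ∘ (fun w : Fin d → ℝ => a • w)) = fun w => a ^ 2 * f w :=
    funext fun w => hhom a w
  have h4 : fderiv ℝ (fun w : Fin d → ℝ => a ^ 2 * f w) z = a ^ 2 • fderiv ℝ f z :=
    fderiv_const_mul (aux_diffAt hf hz) _
  rw [h3, h4, h2] at h1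
  ext v
  have := congrArg (fun (L : (Fin d → ℝ) →L[ℝ] ℝ) => L v) h1
  simp only [ContinuousLinearMap.coe_comp', Function.comp_apply,
    ContinuousLinearMap.smul_apply, ContinuousLinearMap.coe_smul',
    ContinuousLinearMap.coe_id', Pi.smul_apply, id_eq] at this
  have hmap : fderiv ℝ f (a • z) (a • v) = a * fderiv ℝ f (a • z) v := by
    rw [map_smul]; simp
  rw [hmap] at this
  have ha' : a ≠ 0 := ne_of_gt ha
  simp only [smul_eq_mul] at this
  simp only [ContinuousLinearMap.smul_apply, smul_eq_mul]
  have h6 : a * ((fderiv ℝ f (a • z)) v) = a * (a * (fderiv ℝ f z) v) := by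
    linear_combination -this
  exact mul_left_cancel₀ ha' h6

lemma fderiv2_homog (hf : ContDiffOn ℝ 2 f {(0: Fin d → ℝ)}ᶜ)
    (hhom : ∀ (a : ℝ) (z), f (a • z) = a ^ 2 * f z)
    {a : ℝ} (ha : 0 < a) {z : Fin d → ℝ} (hz : z ≠ 0) (v w : Fin d → ℝ) :
    fderiv ℝ (fderiv ℝ f) (a • z) v w = fderiv ℝ (fderiv ℝ f) z v w := by
  have haz : a • z ≠ 0 := smul_ne_zero (ne_of_gt ha) hz
  set g := fderiv ℝ f with hg
  have hev : (g ∘ (fun w : Fin d → ℝ => a • w)) =ᶠ[𝓝 z] (fun w => a • g w) := by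
    have hmem : {w : Fin d → ℝ | w ≠ 0} ∈ 𝓝 z :=
      isOpen_compl_singleton.mem_nhds (by simpa using hz)
    filter_upwards [hmem] with w hw
    exact fderiv_homog hf hhom ha hw
  have h1 : fderiv ℝ (g ∘ (fun w : Fin d → ℝ => a • w)) z
      = (fderiv ℝ g (a • z)).comp (fderiv ℝ (fun w : Fin d → ℝ => a • w) z) :=
    fderiv_comp z (aux_fderiv_diffAt hf haz) (differentiableAt_id.const_smul a)
  have h2 : fderiv ℝ (fun w : Fin d → ℝ => a • w) z
      = a • ContinuousLinearMap.id ℝ (Fin d → ℝ) := by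
    have hcoe : (fun w : Fin d → ℝ => a • w)
        = ⇑(a • ContinuousLinearMap.id ℝ (Fin d → ℝ)) := by ext w i; simp
    rw [hcoe, ContinuousLinearMap.fderiv]
  have h4 : fderiv ℝ (fun w : Fin d → ℝ => a • g w) z = a • fderiv ℝ g z :=
    fderiv_const_smul (R := ℝ) (aux_fderiv_diffAt hf hz) a
  have h5 : fderiv ℝ (g ∘ fun w : Fin d → ℝ => a • w) z = fderiv ℝ (fun w : Fin d → ℝ => a • g w) z := hev.fderiv_eq
  rw [h1, h2, h4] at h5
  have := congrArg (fun (L : (Fin d → ℝ) →L[ℝ] ((Fin d → ℝ) →L[ℝ] ℝ)) => L v w) h5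
  simp only [ContinuousLinearMap.coe_comp', Function.comp_apply,
    ContinuousLinearMap.smul_apply, ContinuousLinearMap.coe_smul',
    ContinuousLinearMap.coe_id', Pi.smul_apply, id_eq] at this
  have hmap : fderiv ℝ g (a • z) (a • v) w = a * fderiv ℝ g (a • z) v w := by
    rw [map_smul]; simp
  rw [hmap] at this
  have ha' : a ≠ 0 := ne_of_gt ha
  simp only [smul_eq_mul] at this
  exact mul_left_cancel₀ ha' this

lemma euler_like (hf : ContDiffOn ℝ 2 f {(0: Fin d → ℝ)}ᶜ)
    (hhom : ∀ (a : ℝ) (z), f (a • z) = a ^ 2 * f z)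
    {z : Fin d → ℝ} (hz : z ≠ 0) : fderiv ℝ f z z = 2 * f z := by
  have h0 : (0 : Fin d → ℝ) + (1:ℝ) • z ≠ 0 := by simpa using hz
  have h1 : HasDerivAt (fun s : ℝ => f ((0 : Fin d → ℝ) + s • z))
      (fderiv ℝ f ((0 : Fin d → ℝ) + (1:ℝ) • z) z) 1 := path_hasDerivAt hf h0
  have h1' : HasDerivAt (fun s : ℝ => f (s • z)) (fderiv ℝ f z z) 1 := by
    simpa using h1
  have h2 : HasDerivAt (fun s : ℝ => s ^ 2 * f z) (2 * f z) 1 := by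
    have := (hasDerivAt_pow 2 (1:ℝ)).mul_const (f z)
    simpa using this
  have heq : (fun s : ℝ => f (s • z)) = fun s : ℝ => s ^ 2 * f z :=
    funext fun s => hhom s z
  rw [heq] at h1'
  exact h1'.unique h2

variable {N : (Fin d → ℝ) → ℝ}

lemma fderiv_sq_bound (hN0 : ∀ x, N x = 0 ↔ x = 0)
    (hNsmul : ∀ (a : ℝ) (x), N (a • x) = |a| * N x)
    (hNadd : ∀ x y, N (x + y) ≤ N x + N y)
    (hf : ContDiffOn ℝ 2 (fun z => N z ^ 2) {(0: Fin d → ℝ)}ᶜ)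
    {w : Fin d → ℝ} (hw : w ≠ 0) (v : Fin d → ℝ) :
    |fderiv ℝ (fun z => N z ^ 2) w v| ≤ 2 * N w * N v := by
  have hNn := norm_aux_nonneg hN0 hNsmul hNadd
  set f : (Fin d → ℝ) → ℝ := fun z => N z ^ 2 with hfdef
  have h0 : w + (0:ℝ) • v ≠ 0 := by simpa using hw
  have h1 : HasDerivAt (fun t : ℝ => f (w + t • v)) (fderiv ℝ f w v) 0 := by
    have := path_hasDerivAt hf h0
    simpa using this
  set φ : ℝ → ℝ := fun t => f (w + t • v) with hφ
  have hslope : Tendsto (fun t : ℝ => |slope φ 0 t|) (𝓝[≠] (0:ℝ))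
      (𝓝 |fderiv ℝ f w v|) := by
    have := hasDerivAt_iff_tendsto_slope.1 h1
    exact (continuous_abs.tendsto _).comp this
  have hboundfun : Tendsto (fun t : ℝ => N v * (2 * N w + |t| * N v)) (𝓝[≠] (0:ℝ))
      (𝓝 (N v * (2 * N w + |(0:ℝ)| * N v))) := by
    apply Tendsto.mono_left _ nhdsWithin_le_nhds
    exact (continuous_const.mul ((continuous_const.add
      ((continuous_abs).mul continuous_const)))).tendsto 0
  have hle : ∀ᶠ t in 𝓝[≠] (0:ℝ), |slope φ 0 t| ≤ N v * (2 * N w + |t| * N v) := by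
    filter_upwards [self_mem_nhdsWithin] with t ht
    have ht0 : t ≠ 0 := ht
    have ht' : (0:ℝ) < |t| := abs_pos.2 ht0
    have hN1 : |N (w + t • v) - N w| ≤ |t| * N v := by
      have := norm_aux_abs_sub hN0 hNsmul hNadd (w + t • v) w
      simpa [hNsmul] using this
    have hN2 : N (w + t • v) + N w ≤ 2 * N w + |t| * N v := by
      have h3 : N (w + t • v) ≤ N w + |t| * N v := by
        calc N (w + t • v) ≤ N w + N (t • v) := hNadd w (t • v)
          _ = N w + |t| * N v := by rw [hNsmul]
      linarith
    have hNnn : 0 ≤ N (w + t • v) + N w := add_nonneg (hNn _) (hNn _)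
    have hdiff : |φ t - φ 0| ≤ |t| * N v * (2 * N w + |t| * N v) := by
      have hφ0 : φ 0 = N w ^ 2 := by simp [hφ, hfdef]
      have hφt : φ t = N (w + t • v) ^ 2 := rfl
      have hfactor : φ t - φ 0 = (N (w + t • v) - N w) * (N (w + t • v) + N w) := by
        rw [hφ0, hφt]; ring
      rw [hfactor, abs_mul, abs_of_nonneg hNnn]
      exact mul_le_mul hN1 hN2 hNnn (mul_nonneg (abs_nonneg t) (hNn v))
    have hsl : slope φ 0 t = (φ t - φ 0) / t := by
      rw [slope_def_field]; rw [sub_zero]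
    rw [hsl, abs_div, div_le_iff₀ ht']
    calc |φ t - φ 0| ≤ |t| * N v * (2 * N w + |t| * N v) := hdiff
      _ = N v * (2 * N w + |t| * N v) * |t| := by ring
  have hfinal := le_of_tendsto_of_tendsto hslope hboundfun hle
  have : N v * (2 * N w + |(0:ℝ)| * N v) = 2 * N w * N v := by
    simp; ring
  rw [this] at hfinal
  exact hfinal

theorem smooth_strongly_convex_norm_sphere_circle_finite
    (d : ℕ)
    (N : (Fin d → ℝ) → ℝ)
    (hN0 : ∀ x, N x = 0 ↔ x = 0)
    (hNsmul : ∀ (a : ℝ) (x), N (a • x) = |a| * N x)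
    (hNadd : ∀ x y, N (x + y) ≤ N x + N y)
    (hNsmooth : ContDiffOn ℝ 2 N {(0 : Fin d → ℝ)}ᶜ)
    (hNstrong : ∀ x : Fin d → ℝ, x ≠ 0 → ∀ v : Fin d → ℝ, v ≠ 0 →
      0 < iteratedDeriv 2 (fun t : ℝ => (N (x + t • v)) ^ 2) 0) :
    ∃ r₀ : ℝ, 0 < r₀ ∧ ∀ r : ℝ, 0 < r → r < r₀ →
      ∀ P : Submodule ℝ (Fin d → ℝ), Module.finrank ℝ P = 2 →
        ∀ x : Fin d → ℝ, N x = 1 →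
          {z : Fin d → ℝ | z ∈ P ∧ N z = 1 ∧ N (z - x) = r}.Finite := by
  rcases Nat.eq_zero_or_pos d with hd | hd
  · refine ⟨1, one_pos, fun r hr hr1 P hP x hx => ?_⟩
    exfalso
    have h1 : Module.finrank ℝ P ≤ Module.finrank ℝ (Fin d → ℝ) := P.finrank_le
    rw [hP, Module.finrank_fin_fun] at h1
    omega
  -- setup
  have hNn := norm_aux_nonneg hN0 hNsmul hNadd
  have hNcont := norm_aux_cont hN0 hNsmul hNadd
  obtain ⟨c₂, hc₂pos, hc₂⟩ := norm_aux_upper hN0 hNsmul hNadd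
  obtain ⟨c₁, hc₁pos, hc₁⟩ := norm_aux_lower hd hN0 hNsmul hNadd
  set f : (Fin d → ℝ) → ℝ := fun z => N z ^ 2 with hfdef
  have hf : ContDiffOn ℝ 2 f {(0 : Fin d → ℝ)}ᶜ := hNsmooth.pow 2
  have hfc : Continuous f := hNcont.pow 2
  have hhom : ∀ (a : ℝ) (z), f (a • z) = a ^ 2 * f z := by
    intro a z
    simp only [hfdef, hNsmul, mul_pow, sq_abs]
  have hQpos : ∀ z : Fin d → ℝ, z ≠ 0 → ∀ v : Fin d → ℝ, v ≠ 0 →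
      0 < fderiv ℝ (fderiv ℝ f) z v v := by
    intro z hz v hv
    have := hNstrong z hz v hv
    rwa [iterated_eq_f'' hf hz v] at this
  have hf'cont : ContinuousOn (fderiv ℝ f) {(0 : Fin d → ℝ)}ᶜ :=
    hf.continuousOn_fderiv_of_isOpen isOpen_compl_singleton (by norm_num)
  have hf''cont : ContinuousOn (fderiv ℝ (fderiv ℝ f)) {(0 : Fin d → ℝ)}ᶜ :=
    (aux_fderiv_contDiffOn hf).continuousOn_fderiv_of_isOpen isOpen_compl_singleton le_rfl
  -- instance
  haveI : Nontrivial (Fin d → ℝ) := by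
    refine ⟨0, (fun _ => 1), fun h => ?_⟩
    have := congrFun h ⟨0, hd⟩
    norm_num at this
  -- compact set of pairs
  set K : Set ((Fin d → ℝ) × (Fin d → ℝ)) :=
    (Metric.sphere (0 : Fin d → ℝ) 1) ×ˢ (Metric.sphere (0 : Fin d → ℝ) 1) with hKdef
  have hKcpt : IsCompact K := (isCompact_sphere 0 1).prod (isCompact_sphere 0 1)
  have hKne : K.Nonempty :=
    (NormedSpace.sphere_nonempty.2 zero_le_one).prod (NormedSpace.sphere_nonempty.2 zero_le_one)
  have hKne0 : ∀ p ∈ K, p.1 ≠ (0 : Fin d → ℝ) ∧ p.2 ≠ (0 : Fin d → ℝ) := by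
    intro p hp
    rw [hKdef, Set.mem_prod, mem_sphere_iff_norm, mem_sphere_iff_norm, sub_zero, sub_zero] at hp
    constructor
    · intro h; rw [h] at hp; simp at hp
    · intro h; rw [h] at hp; simp at hp
  have hQcontK : ContinuousOn (fun p : (Fin d → ℝ) × (Fin d → ℝ) =>
      fderiv ℝ (fderiv ℝ f) p.1 p.2 p.2) K := by
    have h1 : ContinuousOn (fun p : (Fin d → ℝ) × (Fin d → ℝ) =>
        fderiv ℝ (fderiv ℝ f) p.1) K := by
      apply hf''cont.comp continuousOn_fst
      intro p hp
      simpa using (hKne0 p hp).1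
    exact (h1.clm_apply continuousOn_snd).clm_apply continuousOn_snd
  obtain ⟨pmin, hpminK, hpmin⟩ := hKcpt.exists_isMinOn hKne hQcontK
  obtain ⟨pmax, hpmaxK, hpmax⟩ := hKcpt.exists_isMaxOn hKne hQcontK
  set m : ℝ := fderiv ℝ (fderiv ℝ f) pmin.1 pmin.2 pmin.2 with hmdef
  set M : ℝ := fderiv ℝ (fderiv ℝ f) pmax.1 pmax.2 pmax.2 with hMdef
  have hm : 0 < m := hQpos pmin.1 (hKne0 pmin hpminK).1 pmin.2 (hKne0 pmin hpminK).2
  have hmM : m ≤ M := hpmax hpminK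
  have hM : 0 < M := lt_of_lt_of_le hm hmM
  -- uniform bounds via homogeneity
  have hQbound : ∀ z : Fin d → ℝ, z ≠ 0 → ∀ v : Fin d → ℝ, ‖v‖ = 1 →
      m ≤ fderiv ℝ (fderiv ℝ f) z v v ∧ fderiv ℝ (fderiv ℝ f) z v v ≤ M := by
    intro z hz v hv
    have hnz : (0:ℝ) < ‖z‖ := norm_pos_iff.2 hz
    have hinv : (0:ℝ) < ‖z‖⁻¹ := by positivity
    have hzmem : (‖z‖⁻¹ • z, v) ∈ K := by
      rw [hKdef, Set.mem_prod, mem_sphere_iff_norm, mem_sphere_iff_norm]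
      constructor
      · rw [sub_zero, norm_smul, norm_inv, norm_norm]
        field_simp
      · rw [sub_zero]; exact hv
    have heq : fderiv ℝ (fderiv ℝ f) (‖z‖⁻¹ • z) v v = fderiv ℝ (fderiv ℝ f) z v v :=
      fderiv2_homog hf hhom hinv hz v v
    exact ⟨heq ▸ hpmin hzmem, heq ▸ hpmax hzmem⟩
  refine ⟨m / M, by positivity, fun r hr hrr₀ P hP x hx => ?_⟩
  by_contra hfin
  have hinf : {z : Fin d → ℝ | z ∈ P ∧ N z = 1 ∧ N (z - x) = r}.Infinite := hfin
  set Z : Set (Fin d → ℝ) := {z | z ∈ P ∧ N z = 1 ∧ N (z - x) = r} with hZdef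
  -- Z is compact
  have hZsub : Z = (P : Set (Fin d → ℝ)) ∩ (N ⁻¹' {1} ∩ ((fun z => N (z - x)) ⁻¹' {r})) := by
    ext z
    simp [hZdef, Set.mem_preimage, and_assoc]
  have hZclosed : IsClosed Z := by
    rw [hZsub]
    refine (Submodule.closed_of_finiteDimensional P).inter
      ((IsClosed.preimage hNcont isClosed_singleton).inter
        (IsClosed.preimage (hNcont.comp (continuous_id.sub continuous_const)) isClosed_singleton))
  have hZbdd : Bornology.IsBounded Z := by
    rw [isBounded_iff_forall_norm_le]
    refine ⟨c₁⁻¹, fun z hz => ?_⟩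
    have h1 : c₁ * ‖z‖ ≤ N z := hc₁ z
    rw [hz.2.1] at h1
    rw [← le_div_iff₀' hc₁pos] at h1
    simpa [one_div, div_eq_mul_inv, mul_comm] using h1
  have hZcpt : IsCompact Z := Metric.isCompact_iff_isClosed_bounded.2 ⟨hZclosed, hZbdd⟩
  -- extract convergent injective sequence
  set e : ℕ ↪ Z := hinf.natEmbedding
  obtain ⟨z₀, hz₀Z, ψ, hψ, hwlim⟩ := hZcpt.tendsto_subseq (x := fun n => (e n : Fin d → ℝ))
    (fun n => (e n).2)
  set w : ℕ → (Fin d → ℝ) := (fun n => (e n : Fin d → ℝ)) ∘ ψ with hwdef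
  have hwZ : ∀ n, w n ∈ Z := fun n => (e (ψ n)).2
  have hwinj : Function.Injective w := by
    intro a b hab
    have h1 : e (ψ a) = e (ψ b) := Subtype.val_injective hab
    exact hψ.injective (e.injective h1)
  -- facts about z₀
  have hz₀P : z₀ ∈ P := hz₀Z.1
  have hz₀1 : N z₀ = 1 := hz₀Z.2.1
  have hz₀r : N (z₀ - x) = r := hz₀Z.2.2
  have hz₀ne : z₀ ≠ 0 := fun h => by rw [h, (hN0 0).2 rfl] at hz₀1; norm_num at hz₀1
  have hz₀xne : z₀ - x ≠ 0 := fun h => by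
    rw [h, (hN0 0).2 rfl] at hz₀r; exact absurd hz₀r.symm (ne_of_gt hr)
  -- eventually w n ≠ z₀
  have hne : ∀ᶠ n in Filter.atTop, w n ≠ z₀ := by
    have hfin2 : {n : ℕ | w n = z₀}.Finite := by
      apply Set.Subsingleton.finite
      intro a ha b hb
      exact hwinj (ha.trans hb.symm)
    have := hfin2.eventually_cofinite_notMem
    rw [Nat.cofinite_eq_atTop] at this
    exact this
  set T : ℕ → ℝ := fun n => ‖w n - z₀‖ with hTdef
  set U : ℕ → (Fin d → ℝ) := fun n => (T n)⁻¹ • (w n - z₀) with hUdef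
  have hT0 : Filter.Tendsto T Filter.atTop (𝓝 0) := by
    have h1 : Filter.Tendsto (fun n => w n - z₀) Filter.atTop (𝓝 (z₀ - z₀)) :=
      hwlim.sub tendsto_const_nhds
    rw [sub_self] at h1
    simpa [hTdef, Function.comp_def] using (continuous_norm.tendsto (0 : Fin d → ℝ)).comp h1
  set ε₀ : ℝ := min 1 r / (2 * c₂) with hε₀def
  have hε₀pos : 0 < ε₀ := by
    apply div_pos (lt_min one_pos hr) (by positivity)
  have hTsmall : ∀ᶠ n in Filter.atTop, T n < ε₀ := by
    have := hT0.eventually (gt_mem_nhds hε₀pos)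
    simpa using this
  obtain ⟨n₀, hn₀⟩ := (hne.and hTsmall).exists_forall_of_atTop
  -- second extraction for directions
  have hUP : ∀ n, w n ≠ z₀ → (U n ∈ Metric.sphere (0 : Fin d → ℝ) 1 ∧ U n ∈ P) := by
    intro n hn
    have hTpos : 0 < T n := by
      rw [hTdef]; simpa [norm_pos_iff, sub_eq_zero] using hn
    constructor
    · rw [mem_sphere_iff_norm, sub_zero, hUdef]
      rw [norm_smul, norm_inv, norm_norm]
      field_simp
      exact div_self (ne_of_gt (by simpa [hTdef] using hTpos))
    · exact Submodule.smul_mem P _ (Submodule.sub_mem P (hwZ n).1 hz₀P)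
  set S : Set (Fin d → ℝ) := Metric.sphere (0 : Fin d → ℝ) 1 ∩ (P : Set (Fin d → ℝ))
    with hSdef
  have hScpt : IsCompact S :=
    (isCompact_sphere 0 1).inter_right (Submodule.closed_of_finiteDimensional P)
  have hVS : ∀ k : ℕ, U (k + n₀) ∈ S := by
    intro k
    have := hUP (k + n₀) (hn₀ (k + n₀) (Nat.le_add_left _ _)).1
    exact ⟨this.1, this.2⟩
  obtain ⟨u, huS, θ, hθ, hulim⟩ := hScpt.tendsto_subseq hVS
  set ι : ℕ → ℕ := fun k => θ k + n₀ with hιdef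
  have hιatTop : Filter.Tendsto ι Filter.atTop Filter.atTop := by
    have h1 : Filter.Tendsto θ Filter.atTop Filter.atTop := hθ.tendsto_atTop
    exact Filter.tendsto_atTop_mono (fun k => Nat.le_add_right (θ k) n₀) h1
  have hwι : ∀ k, w (ι k) ≠ z₀ ∧ T (ι k) < ε₀ :=
    fun k => hn₀ (ι k) (Nat.le_add_left _ _)
  have hTι0 : Filter.Tendsto (fun k => T (ι k)) Filter.atTop (𝓝 0) := hT0.comp hιatTop
  have huι : Filter.Tendsto (fun k => U (ι k)) Filter.atTop (𝓝 u) := hulim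
  have hu1 : ‖u‖ = 1 := by
    have := huS.1; rwa [mem_sphere_iff_norm, sub_zero] at this
  have huP : u ∈ P := huS.2
  have hune : u ≠ 0 := fun h => by rw [h, norm_zero] at hu1; norm_num at hu1
  have hUnorm : ∀ k, ‖U (ι k)‖ = 1 := by
    intro k
    have := (hUP (ι k) (hwι k).1).1
    rwa [mem_sphere_iff_norm, sub_zero] at this
  have hUinP : ∀ k, U (ι k) ∈ P := fun k => (hUP (ι k) (hwι k).1).2
  have htpos : ∀ k, 0 < T (ι k) := by
    intro k
    rw [hTdef]
    simpa [norm_pos_iff, sub_eq_zero] using (hwι k).1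
  have hteq : ∀ k, z₀ + T (ι k) • U (ι k) = w (ι k) := by
    intro k
    rw [hUdef, smul_inv_smul₀ (ne_of_gt (htpos k))]
    abel
  have hNsmall : ∀ k, ∀ s ∈ Set.Icc (0:ℝ) (T (ι k)), N (s • U (ι k)) ≤ min 1 r / 2 := by
    intro k s hs
    rw [hNsmul, abs_of_nonneg hs.1]
    have h1 : N (U (ι k)) ≤ c₂ := by
      have := hc₂ (U (ι k)); rwa [hUnorm k, mul_one] at this
    have h2 : s * N (U (ι k)) ≤ s * c₂ :=
      mul_le_mul_of_nonneg_left h1 hs.1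
    have h3 : s * c₂ ≤ T (ι k) * c₂ := mul_le_mul_of_nonneg_right hs.2 (le_of_lt hc₂pos)
    have h4 : T (ι k) * c₂ < ε₀ * c₂ := mul_lt_mul_of_pos_right (hwι k).2 hc₂pos
    have h5 : ε₀ * c₂ = min 1 r / 2 := by
      rw [hε₀def]; field_simp
    linarith
  have hseg1 : ∀ k, ∀ s ∈ Set.Icc (0:ℝ) (T (ι k)), z₀ + s • U (ι k) ≠ 0 := by
    intro k s hs h
    have h1 : z₀ = -(s • U (ι k)) := by
      rw [← sub_eq_zero]; rw [← h]; abel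
    have h2 : N z₀ ≤ min 1 r / 2 := by
      rw [h1, norm_aux_neg hNsmul]; exact hNsmall k s hs
    rw [hz₀1] at h2
    have : min 1 r ≤ 1 := min_le_left _ _
    linarith
  have hseg2 : ∀ k, ∀ s ∈ Set.Icc (0:ℝ) (T (ι k)), (z₀ - x) + s • U (ι k) ≠ 0 := by
    intro k s hs h
    have h1 : z₀ - x = -(s • U (ι k)) := by
      rw [← sub_eq_zero]; rw [← h]; abel
    have h2 : N (z₀ - x) ≤ min 1 r / 2 := by
      rw [h1, norm_aux_neg hNsmul]; exact hNsmall k s hs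
    rw [hz₀r] at h2
    have : min 1 r ≤ r := min_le_right _ _
    linarith
  -- first-order vanishing
  have first_order : ∀ b : Fin d → ℝ, b ≠ 0 →
      (∀ k, ∀ s ∈ Set.Icc (0:ℝ) (T (ι k)), b + s • U (ι k) ≠ 0) →
      (∀ k, f (b + T (ι k) • U (ι k)) = f b) →
      fderiv ℝ f b u = 0 := by
    intro b hb hseg hval
    have hex : ∀ k, ∃ s, s ∈ Set.Ioo (0:ℝ) (T (ι k)) ∧
        fderiv ℝ f (b + s • U (ι k)) (U (ι k)) = 0 := by
      intro k
      have hcont : ContinuousOn (fun s : ℝ => f (b + s • U (ι k)))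
          (Set.Icc 0 (T (ι k))) := by
        apply Continuous.continuousOn
        exact hfc.comp (continuous_const.add (continuous_id.smul continuous_const))
      have hend : (fun s : ℝ => f (b + s • U (ι k))) 0
          = (fun s : ℝ => f (b + s • U (ι k))) (T (ι k)) := by
        show f (b + (0:ℝ) • U (ι k)) = f (b + T (ι k) • U (ι k))
        rw [zero_smul, add_zero, hval k]
      obtain ⟨s, hs, hds⟩ := exists_deriv_eq_zero (htpos k) hcont hend
      refine ⟨s, hs, ?_⟩
      have hne' : b + s • U (ι k) ≠ 0 := hseg k s (Set.mem_Icc.2 ⟨hs.1.le, hs.2.le⟩)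
      rw [(path_hasDerivAt hf hne').deriv] at hds
      exact hds
    choose sA hsA hdA using hex
    have hsA0 : Filter.Tendsto sA Filter.atTop (𝓝 0) :=
      squeeze_zero (fun k => (hsA k).1.le) (fun k => (hsA k).2.le) hTι0
    have hsmall : Filter.Tendsto (fun k => sA k • U (ι k)) Filter.atTop (𝓝 0) := by
      apply squeeze_zero_norm _ hsA0
      intro k
      rw [norm_smul, hUnorm k, mul_one, Real.norm_eq_abs, abs_of_nonneg (hsA k).1.le]
    have hbase : Filter.Tendsto (fun k => b + sA k • U (ι k)) Filter.atTop (𝓝 b) := by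
      have := tendsto_const_nhds (x := b) (f := Filter.atTop (α := ℕ)) |>.add hsmall
      simpa using this
    have hcontAt : ContinuousAt (fderiv ℝ f) b :=
      hf'cont.continuousAt (isOpen_compl_singleton.mem_nhds (by simpa using hb))
    have hlim1 : Filter.Tendsto (fun k => fderiv ℝ f (b + sA k • U (ι k)))
        Filter.atTop (𝓝 (fderiv ℝ f b)) := hcontAt.tendsto.comp hbase
    have hlim2 : Filter.Tendsto (fun k => fderiv ℝ f (b + sA k • U (ι k)) (U (ι k)))
        Filter.atTop (𝓝 (fderiv ℝ f b u)) :=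
      (isBoundedBilinearMap_apply.continuous.tendsto (fderiv ℝ f b, u)).comp
        (hlim1.prodMk_nhds huι)
    have hzero : Filter.Tendsto (fun _ : ℕ => (0:ℝ)) Filter.atTop (𝓝 (fderiv ℝ f b u)) :=
      hlim2.congr (fun k => hdA k)
    exact tendsto_nhds_unique hzero tendsto_const_nhds
  have hAu : fderiv ℝ f z₀ u = 0 := by
    apply first_order z₀ hz₀ne hseg1
    intro k
    rw [hteq k]
    show N (w (ι k)) ^ 2 = N z₀ ^ 2
    rw [(hwZ (ι k)).2.1, hz₀1]
  have hBu : fderiv ℝ f (z₀ - x) u = 0 := by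
    apply first_order (z₀ - x) hz₀xne hseg2
    intro k
    have h1 : (z₀ - x) + T (ι k) • U (ι k) = w (ι k) - x := by
      rw [← hteq k]; abel
    rw [h1]
    show N (w (ι k) - x) ^ 2 = N (z₀ - x) ^ 2
    rw [(hwZ (ι k)).2.2, hz₀r]
  -- Euler identity and lambda
  have hfz₀ : f z₀ = 1 := by
    show N z₀ ^ 2 = 1
    rw [hz₀1]; norm_num
  have hAz₀ : fderiv ℝ f z₀ z₀ = 2 := by
    rw [euler_like hf hhom hz₀ne, hfz₀]; norm_num
  set lam : ℝ := fderiv ℝ f (z₀ - x) z₀ / 2 with hlamdef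
  have hlam_abs : |lam| ≤ r := by
    have h1 : |fderiv ℝ f (z₀ - x) z₀| ≤ 2 * N (z₀ - x) * N z₀ :=
      fderiv_sq_bound hN0 hNsmul hNadd hf hz₀xne z₀
    rw [hz₀r, hz₀1, mul_one] at h1
    rw [hlamdef, abs_div]
    rw [show |(2:ℝ)| = 2 by norm_num]
    linarith [h1]
  -- span argument
  have hindep : LinearIndependent ℝ ![u, z₀] := by
    rw [LinearIndependent.pair_iff]
    intro s t hst
    have h1 : fderiv ℝ f z₀ (s • u + t • z₀) = 0 := by rw [hst]; simp
    rw [map_add, map_smul, map_smul, hAu, hAz₀] at h1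
    simp only [smul_eq_mul, mul_zero, zero_add] at h1
    have ht : t = 0 := by linarith
    refine ⟨?_, ht⟩
    rw [ht, zero_smul, add_zero] at hst
    rcases smul_eq_zero.1 hst with h | h
    · exact h
    · exact absurd h hune
  have hspan : Submodule.span ℝ {u, z₀} = P := by
    have h3 : Set.range ![u, z₀] = {u, z₀} := by
      simp [Matrix.range_cons, Matrix.range_empty]
      exact Set.pair_comm z₀ u
    have h2 : Module.finrank ℝ (Submodule.span ℝ ({u, z₀} : Set (Fin d → ℝ))) = 2 := by
      rw [← h3, finrank_span_eq_card hindep]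
      simp
    apply Submodule.eq_of_le_of_finrank_le
    · rw [Submodule.span_le]
      rintro y (rfl | rfl)
      · exact huP
      · exact hz₀P
    · rw [hP, h2]
  have hLP : ∀ p ∈ P, fderiv ℝ f (z₀ - x) p = lam * fderiv ℝ f z₀ p := by
    intro p hp
    rw [← hspan] at hp
    obtain ⟨a, b, hab⟩ := Submodule.mem_span_pair.1 hp
    rw [← hab, map_add, map_add, map_smul, map_smul, map_smul, map_smul, hAu, hBu, hAz₀]
    simp only [smul_eq_mul, mul_zero, zero_add, mul_add]
    rw [hlamdef]
    ring
  -- second order argument at k = 0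
  set uu : Fin d → ℝ := U (ι 0) with huudef
  set t0 : ℝ := T (ι 0) with ht0def
  have hLuu : fderiv ℝ f (z₀ - x) uu = lam * fderiv ℝ f z₀ uu := hLP _ (hUinP 0)
  set Φ : ℝ → ℝ := fun s => f ((z₀ - x) + s • uu) - lam * f (z₀ + s • uu) with hΦdef
  have hΦcont : ContinuousOn Φ (Set.Icc 0 t0) := by
    apply Continuous.continuousOn
    exact (hfc.comp (continuous_const.add (continuous_id.smul continuous_const))).sub
      (continuous_const.mul
        (hfc.comp (continuous_const.add (continuous_id.smul continuous_const))))
  have hΦend : Φ 0 = Φ t0 := by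
    have e1 : (z₀ - x) + t0 • uu = w (ι 0) - x := by
      rw [ht0def, huudef, ← hteq 0]; abel
    have e2 : z₀ + t0 • uu = w (ι 0) := by rw [ht0def, huudef, hteq 0]
    have v1 : f ((z₀ - x) + (0:ℝ) • uu) = r ^ 2 := by
      rw [zero_smul, add_zero]
      show N (z₀ - x) ^ 2 = r ^ 2
      rw [hz₀r]
    have v2 : f (z₀ + (0:ℝ) • uu) = 1 := by
      rw [zero_smul, add_zero]; exact hfz₀
    have v3 : f ((z₀ - x) + t0 • uu) = r ^ 2 := by
      rw [e1]
      show N (w (ι 0) - x) ^ 2 = r ^ 2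
      rw [(hwZ (ι 0)).2.2]
    have v4 : f (z₀ + t0 • uu) = 1 := by
      rw [e2]
      show N (w (ι 0)) ^ 2 = 1
      rw [(hwZ (ι 0)).2.1]; norm_num
    show f ((z₀ - x) + (0:ℝ) • uu) - lam * f (z₀ + (0:ℝ) • uu)
        = f ((z₀ - x) + t0 • uu) - lam * f (z₀ + t0 • uu)
    rw [v1, v2, v3, v4]
  obtain ⟨s₁, hs₁, hds₁⟩ := exists_deriv_eq_zero (htpos 0) hΦcont hΦend
  set D : ℝ → ℝ := fun s => fderiv ℝ f ((z₀ - x) + s • uu) uu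
    - lam * fderiv ℝ f (z₀ + s • uu) uu with hDdef
  have hΦhasDeriv : ∀ s ∈ Set.Icc (0:ℝ) t0, HasDerivAt Φ (D s) s := by
    intro s hs
    exact ((path_hasDerivAt hf (hseg2 0 s hs)).sub
      ((path_hasDerivAt hf (hseg1 0 s hs)).const_mul lam))
  have hs₁Icc : s₁ ∈ Set.Icc (0:ℝ) t0 := ⟨hs₁.1.le, hs₁.2.le⟩
  have hDs₁ : D s₁ = 0 := by
    rw [← (hΦhasDeriv s₁ hs₁Icc).deriv]
    exact hds₁
  have hD0 : D 0 = 0 := by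
    rw [hDdef]
    show fderiv ℝ f ((z₀ - x) + (0:ℝ) • uu) uu - lam * fderiv ℝ f (z₀ + (0:ℝ) • uu) uu = 0
    rw [zero_smul, add_zero, add_zero, hLuu]
    ring
  have hDcont : ContinuousOn D (Set.Icc 0 s₁) := by
    have hsub : ∀ s ∈ Set.Icc (0:ℝ) s₁, s ∈ Set.Icc (0:ℝ) t0 :=
      fun s hs => ⟨hs.1, hs.2.trans hs₁.2.le⟩
    have hc1 : ContinuousOn (fun s : ℝ => fderiv ℝ f ((z₀ - x) + s • uu))
        (Set.Icc 0 s₁) := by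
      apply hf'cont.comp
        ((continuous_const.add (continuous_id.smul continuous_const)).continuousOn)
      intro s hs
      simpa using hseg2 0 s (hsub s hs)
    have hc2 : ContinuousOn (fun s : ℝ => fderiv ℝ f (z₀ + s • uu))
        (Set.Icc 0 s₁) := by
      apply hf'cont.comp
        ((continuous_const.add (continuous_id.smul continuous_const)).continuousOn)
      intro s hs
      simpa using hseg1 0 s (hsub s hs)
    exact (hc1.clm_apply continuousOn_const).sub
      (continuousOn_const.mul (hc2.clm_apply continuousOn_const))
  obtain ⟨s₂, hs₂, hds₂⟩ := exists_deriv_eq_zero hs₁.1 hDcont (hD0.trans hDs₁.symm)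
  have hs₂Icc : s₂ ∈ Set.Icc (0:ℝ) t0 :=
    ⟨hs₂.1.le, (hs₂.2.trans hs₁.2).le⟩
  have hDhasDeriv : HasDerivAt D
      (fderiv ℝ (fderiv ℝ f) ((z₀ - x) + s₂ • uu) uu uu
        - lam * fderiv ℝ (fderiv ℝ f) (z₀ + s₂ • uu) uu uu) s₂ :=
    ((path2_hasDerivAt hf (hseg2 0 s₂ hs₂Icc)).sub
      ((path2_hasDerivAt hf (hseg1 0 s₂ hs₂Icc)).const_mul lam))
  have hkey : fderiv ℝ (fderiv ℝ f) ((z₀ - x) + s₂ • uu) uu uu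
      = lam * fderiv ℝ (fderiv ℝ f) (z₀ + s₂ • uu) uu uu := by
    have := hDhasDeriv.deriv
    rw [hds₂] at this
    linarith [this.symm]
  -- contradiction
  have hQ1 := (hQbound _ (hseg2 0 s₂ hs₂Icc) uu (hUnorm 0)).1
  have hQ2 := (hQbound _ (hseg1 0 s₂ hs₂Icc) uu (hUnorm 0)).2
  have huune : uu ≠ 0 := by
    intro h
    have h1 := hUnorm 0
    rw [← huudef, h, norm_zero] at h1
    norm_num at h1
  have hQ2pos := hQpos _ (hseg1 0 s₂ hs₂Icc) uu huune
  have h5 : lam ≤ |lam| := le_abs_self lam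
  have h6 : lam * fderiv ℝ (fderiv ℝ f) (z₀ + s₂ • uu) uu uu
      ≤ r * fderiv ℝ (fderiv ℝ f) (z₀ + s₂ • uu) uu uu :=
    mul_le_mul_of_nonneg_right (h5.trans hlam_abs) hQ2pos.le
  have h7 : r * fderiv ℝ (fderiv ℝ f) (z₀ + s₂ • uu) uu uu ≤ r * M :=
    mul_le_mul_of_nonneg_left hQ2 hr.le
  have h8 : r * M < (m / M) * M := mul_lt_mul_of_pos_right hrr₀ hM
  have h9 : (m / M) * M = m := div_mul_cancel₀ m (ne_of_gt hM)
  have h10 : m ≤ fderiv ℝ (fderiv ℝ f) ((z₀ - x) + s₂ • uu) uu uu := hQ1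
  linarith [hkey]
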